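/- For all u, v ∈ kX_∞, the coproduct satisfies Δ(u⋄v) = Δ(u)⋄Δ(v); that is, Δ is a homomorphism of k-algebras from (kX_∞, ⋄) to (kX_∞ ⊗ kX_∞, ⋄⊗⋄). -/

import Mathlib

open TensorProduct

universe u v

/-- Letters of Rota-Baxter bracketed words: either a variable from `X` or a
bracketed word `⌊w⌋` (a list of letters). -/
inductive RBL (X : Type u) : Type u
  | var : X → RBL X
  | br : List (RBL X) → RBL X

namespace RBL

variable {X : Type u}

/-- `a.isBr = true` iff the letter `a` is a bracketed element `⌊w⌋ ∈ ⌊X_∞⌋`. -/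
def isBr : RBL X → Bool
  | var _ => false
  | br _ => true

mutual
  /-- Validity of a letter: the inside of a bracket must be a Rota-Baxter bracketed word. -/
  def valid : RBL X → Prop
    | var _ => True
    | br l => wordValid l
  /-- `wordValid l` says that the list of letters `l` is a Rota-Baxter bracketed word,
  i.e. all letters are valid and the letters alternate (no two consecutive brackets). -/
  def wordValid : List (RBL X) → Prop
    | [] => True
    | [a] => valid a
    | a :: b :: l => valid a ∧ ¬(a.isBr = true ∧ b.isBr = true) ∧ wordValid (b :: l)
end

lemma wordValid_nil : wordValid ([] : List (RBL X)) := by simp [wordValid]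

lemma wordValid_var (x : X) : wordValid [var x] := by simp [wordValid, valid]

lemma wordValid_br {l : List (RBL X)} (h : wordValid l) : wordValid [br l] := by
  simpa [wordValid, valid] using h

mutual
  /-- The total degree of a letter. -/
  def degL : RBL X → ℕ
    | var _ => 1
    | br l => degW l + 1
  /-- The total degree of a word: the number of occurrences of brackets (i.e. of `P`)
  plus the number of occurrences of letters of `X`. -/
  def degW : List (RBL X) → ℕ
    | [] => 0
    | a :: l => degL a + degW l
end

end RBL

/-- The set `X_∞` of Rota-Baxter bracketed words on `X`. -/
def RBWord (X : Type u) : Type u := {l : List (RBL X) // RBL.wordValid l}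

namespace RBWord

variable {X : Type u}

/-- The empty word `1`. -/
def one : RBWord X := ⟨[], RBL.wordValid_nil⟩

/-- The total degree of a Rota-Baxter bracketed word. -/
def deg (w : RBWord X) : ℕ := RBL.degW w.1

end RBWord

variable (k : Type v) [CommRing k] (X : Type u)

/-- The free `k`-module `kX_∞` on the Rota-Baxter bracketed words. -/
abbrev RBMod : Type max u v := RBWord X →₀ k

variable {X}

/-- A Rota-Baxter bracketed word viewed as a basis element of `kX_∞`. -/
noncomputable def sing (w : RBWord X) : RBMod k X := Finsupp.single w 1

variable (X)

/-- The Rota-Baxter operator `P` on `kX_∞`, sending a basis word `w` to `⌊w⌋`. -/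
noncomputable def Pop : RBMod k X →ₗ[k] RBMod k X :=
  Finsupp.lmapDomain k k fun w => (⟨[RBL.br w.1], RBL.wordValid_br w.2⟩ : RBWord X)

/-- Concatenation on the left by `u₀` and on the right by `v₀`, as a linear map on `kX_∞`
(sending basis words whose concatenation is not valid to `0`; in all uses below
the concatenations are valid). -/
noncomputable def concatLR (u₀ v₀ : List (RBL X)) : RBMod k X →ₗ[k] RBMod k X :=
  Finsupp.lsum k fun w =>
    letI := Classical.dec (RBL.wordValid (u₀ ++ w.1 ++ v₀))
    if h : RBL.wordValid (u₀ ++ w.1 ++ v₀) then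
      Finsupp.lsingle (⟨u₀ ++ w.1 ++ v₀, h⟩ : RBWord X) else 0

/-- The counit `ε : kX_∞ → k`, `ε(1) = 1` and `ε(w) = 0` for basis words `w ≠ 1`. -/
noncomputable def eps : RBMod k X →ₗ[k] k := Finsupp.lapply RBWord.one

/-- The homogeneous component `H^(n)` of `kX_∞`: the span of the basis words of total
degree `n`. -/
noncomputable def Hdeg (n : ℕ) : Submodule k (RBMod k X) :=
  Finsupp.supported k k {w : RBWord X | w.deg = n}

variable (lam : k)

/-- The data of the product `⋄` on the free Rota-Baxter algebra `kX_∞` of weight `lam`,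
together with its recursive defining equations:
* if the concatenation of `u` and `v` is again a Rota-Baxter bracketed word (in particular
  if `u` or `v` is empty, or if the last letter of `u` or the first letter of `v` is a
  variable), then `u ⋄ v` is the concatenation `uv`;
* if `u = u₀⌊ā⌋` and `v = ⌊b̄⌋v₀`, then
  `u ⋄ v = u₀(⌊⌊ā⌋ ⋄ b̄⌋ + ⌊ā ⋄ ⌊b̄⌋⌋ + λ⌊ā ⋄ b̄⌋)v₀`. -/
structure FreeRBAData where
  /-- the product `⋄`, as a `k`-bilinear map -/
  d : RBMod k X →ₗ[k] RBMod k X →ₗ[k] RBMod k X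
  d_concat : ∀ (u v : RBWord X) (h : RBL.wordValid (u.1 ++ v.1)),
    d (sing k u) (sing k v) = sing k ⟨u.1 ++ v.1, h⟩
  d_br : ∀ (u₀ v₀ : List (RBL X)) (a b : RBWord X)
    (hu : RBL.wordValid (u₀ ++ [RBL.br a.1])) (hv : RBL.wordValid (RBL.br b.1 :: v₀)),
    d (sing k ⟨u₀ ++ [RBL.br a.1], hu⟩) (sing k ⟨RBL.br b.1 :: v₀, hv⟩)
      = concatLR k X u₀ v₀
          (Pop k X (d (Pop k X (sing k a)) (sing k b))
            + Pop k X (d (sing k a) (Pop k X (sing k b)))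
            + lam • Pop k X (d (sing k a) (sing k b)))

namespace FreeRBAData

variable {k X lam}

/-- The componentwise product `⋄ ⊗ ⋄` on `kX_∞ ⊗ kX_∞`. -/
noncomputable def mulT (D : FreeRBAData k X lam) :
    (RBMod k X ⊗[k] RBMod k X) →ₗ[k] (RBMod k X ⊗[k] RBMod k X) →ₗ[k]
      (RBMod k X ⊗[k] RBMod k X) :=
  TensorProduct.map₂ D.d D.d

end FreeRBAData

/-- The free Rota-Baxter algebra `kX_∞` of weight `lam` together with the coproduct `Δ`,
characterized by its recursive defining equations:
`Δ(1) = 1 ⊗ 1`, `Δ(x) = x ⊗ 1 + 1 ⊗ x` for `x ∈ X`,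
`Δ(⌊w⌋) = ⌊w⌋ ⊗ 1 + (id ⊗ P)Δ(w)`, and
`Δ(w₁ ⋄ ⋯ ⋄ w_m) = Δ(w₁) ⋄ ⋯ ⋄ Δ(w_m)` for the `⋄`-factorization of a word into its
(alternating) sequence of letters. -/
structure FreeRBBialgData extends FreeRBAData k X lam where
  /-- the coproduct `Δ` -/
  Dl : RBMod k X →ₗ[k] (RBMod k X ⊗[k] RBMod k X)
  Dl_one : Dl (sing k RBWord.one) = sing k RBWord.one ⊗ₜ[k] sing k RBWord.one
  Dl_var : ∀ (x : X),
    Dl (sing k ⟨[RBL.var x], RBL.wordValid_var x⟩)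
      = sing k ⟨[RBL.var x], RBL.wordValid_var x⟩ ⊗ₜ[k] sing k RBWord.one
        + sing k RBWord.one ⊗ₜ[k] sing k ⟨[RBL.var x], RBL.wordValid_var x⟩
  Dl_br : ∀ w : RBWord X,
    Dl (Pop k X (sing k w))
      = Pop k X (sing k w) ⊗ₜ[k] sing k RBWord.one
        + TensorProduct.map LinearMap.id (Pop k X) (Dl (sing k w))
  Dl_cons : ∀ (a : RBL X) (l : List (RBL X)) (h : RBL.wordValid (a :: l))
    (ha : RBL.wordValid [a]) (hl : RBL.wordValid l), l ≠ [] →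
    Dl (sing k ⟨a :: l, h⟩)
      = TensorProduct.map₂ d d (Dl (sing k ⟨[a], ha⟩)) (Dl (sing k ⟨l, hl⟩))

namespace RBL

variable {X : Type u}

lemma wordValid_map_var (s : List X) : wordValid (s.map RBL.var) := by
  induction s with
  | nil => exact wordValid_nil
  | cons a t ih =>
    cases t with
    | nil => exact wordValid_var a
    | cons b t' =>
      simp only [List.map_cons] at ih ⊢
      exact ⟨by simp [valid], by simp [isBr], ih⟩

end RBL

variable {X}

/-- The word `x₁ ⋯ x_m ∈ M(X)` as a basis element of `kX_∞`. -/
noncomputable def varWord (s : List X) : RBMod k X :=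
  sing k ⟨s.map RBL.var, RBL.wordValid_map_var s⟩

/-- A letter in `X ∪ ⌊X_∞⌋`, viewed as a basis element of `kX_∞` (invalid letters are
sent to `0`; they do not occur below). -/
noncomputable def letterMod (a : RBL X) : RBMod k X :=
  letI := Classical.dec (RBL.wordValid [a])
  if h : RBL.wordValid [a] then sing k ⟨[a], h⟩ else 0

variable (X)

/-- The tensor product `H^(p) ⊗ H^(q)` of homogeneous components, as a submodule of
`kX_∞ ⊗ kX_∞`. -/
noncomputable def HdegT (p q : ℕ) : Submodule k (RBMod k X ⊗[k] RBMod k X) :=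
  Submodule.map₂ (TensorProduct.mk k (RBMod k X) (RBMod k X)) (Hdeg k X p) (Hdeg k X q)

namespace FreeRBAData

variable {k X lam}

/-- The `⋄`-product `w₁ ⋄ (w₂ ⋄ (⋯ ⋄ (w_m ⋄ 1)))` of a sequence of letters. -/
noncomputable def prodList (D : FreeRBAData k X lam) (l : List (RBL X)) : RBMod k X :=
  l.foldr (fun a acc => D.d (letterMod k a) acc) (sing k RBWord.one)

end FreeRBAData
/-! ### Auxiliary infrastructure -/

namespace RBL

variable {X : Type u}

/-- The alternation relation: not both brackets. -/
def altR (a b : RBL X) : Prop := ¬(a.isBr = true ∧ b.isBr = true)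

theorem wordValid_iff : ∀ l : List (RBL X),
    wordValid l ↔ (∀ a ∈ l, valid a) ∧ l.Chain' altR
  | [] => by simp [wordValid, List.Chain', List.isChain_nil]
  | [a] => by simp [wordValid, List.Chain', List.isChain_singleton]
  | a :: b :: l => by
    have ih := wordValid_iff (b :: l)
    simp only [wordValid, ih, List.Chain', List.isChain_cons_cons, List.forall_mem_cons, altR]
    tauto

theorem wordValid_append_iff {p q : List (RBL X)} :
    wordValid (p ++ q) ↔ wordValid p ∧ wordValid q ∧
      ∀ x ∈ p.getLast?, ∀ y ∈ q.head?, altR x y := by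
  simp only [wordValid_iff, List.forall_mem_append, List.Chain', List.isChain_append]
  tauto

theorem degW_append : ∀ p q : List (RBL X), degW (p ++ q) = degW p + degW q
  | [], q => by simp [degW]
  | a :: p, q => by
    simp [degW, degW_append p q]; ring

end RBL

section Basics

variable {k : Type v} [CommRing k] {X : Type u}

theorem sing_congr {l l' : List (RBL X)} (hl : RBL.wordValid l) (hl' : RBL.wordValid l')
    (h : l = l') : sing k ⟨l, hl⟩ = sing k ⟨l', hl'⟩ := by subst h; rfl

theorem Pop_sing (w : RBWord X) :
    Pop k X (sing k w) = sing k ⟨[RBL.br w.1], RBL.wordValid_br w.2⟩ := by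
  simp [Pop, sing, Finsupp.lmapDomain, Finsupp.mapDomain_single]
  exact Finsupp.mapDomain_single

theorem concatLR_sing (u₀ v₀ : List (RBL X)) (w : RBWord X)
    (h : RBL.wordValid (u₀ ++ w.1 ++ v₀)) :
    concatLR k X u₀ v₀ (sing k w) = sing k ⟨u₀ ++ w.1 ++ v₀, h⟩ := by
  simp only [concatLR, sing, Finsupp.lsum_single]
  rw [dif_pos h]
  rfl

theorem concatLR_sing_invalid (u₀ v₀ : List (RBL X)) (w : RBWord X)
    (h : ¬ RBL.wordValid (u₀ ++ w.1 ++ v₀)) :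
    concatLR k X u₀ v₀ (sing k w) = 0 := by
  simp only [concatLR, sing, Finsupp.lsum_single]
  rw [dif_neg h]
  rfl

theorem concatLR_nil_nil : concatLR k X [] [] = LinearMap.id := by
  refine Finsupp.lhom_ext fun w b => ?_
  have hb : (Finsupp.single w b : RBMod k X) = b • sing k w := by
    simp [sing, Finsupp.smul_single]
  have hv : RBL.wordValid ([] ++ w.1 ++ []) := by simpa using w.2
  rw [hb, map_smul, map_smul, concatLR_sing _ _ _ hv, LinearMap.id_apply]
  congr 1
  exact sing_congr _ _ (by simp)

end Basics

section Ext

variable {k : Type v} [CommRing k] {X : Type u}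

theorem single_eq_smul_sing (w : RBWord X) (b : k) :
    (Finsupp.single w b : RBMod k X) = b • sing k w := by
  simp [sing, Finsupp.smul_single]

theorem lhom_ext₂ {N : Type*} [AddCommMonoid N] [Module k N]
    {F G : RBMod k X →ₗ[k] RBMod k X →ₗ[k] N}
    (h : ∀ w w', F (sing k w) (sing k w') = G (sing k w) (sing k w')) : F = G := by
  refine Finsupp.lhom_ext fun w b => ?_
  rw [single_eq_smul_sing, map_smul, map_smul]
  congr 1
  refine Finsupp.lhom_ext fun w' b' => ?_
  rw [single_eq_smul_sing, map_smul, map_smul, h]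

/-- To prove `F x = G x` for linear `F`, `G` and `x` supported on `S`, it is
enough to check it on basis words of `S`. -/
theorem eq_on_supported {N : Type*} [AddCommMonoid N] [Module k N]
    {S : Set (RBWord X)} (F G : RBMod k X →ₗ[k] N)
    (h : ∀ w ∈ S, F (sing k w) = G (sing k w))
    {x : RBMod k X} (hx : x ∈ Finsupp.supported k k S) : F x = G x := by
  rw [Finsupp.supported_eq_span_single] at hx
  induction hx using Submodule.span_induction with
  | mem y hy =>
    obtain ⟨w, hw, rfl⟩ := hy
    exact h w hw
  | zero => simp
  | add x y _ _ hx hy => simp [map_add, hx, hy]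
  | smul c x _ hx => simp [map_smul, hx]

theorem mem_supported_of (S : Set (RBWord X)) {N : Type*} [AddCommMonoid N] [Module k N]
    (F : RBMod k X →ₗ[k] N) (T : Submodule k N)
    (h : ∀ w ∈ S, F (sing k w) ∈ T)
    {x : RBMod k X} (hx : x ∈ Finsupp.supported k k S) : F x ∈ T := by
  rw [Finsupp.supported_eq_span_single] at hx
  induction hx using Submodule.span_induction with
  | mem y hy =>
    obtain ⟨w, hw, rfl⟩ := hy
    exact h w hw
  | zero => simp
  | add x y _ _ hx hy => simpa [map_add] using T.add_mem hx hy
  | smul c x _ hx => simpa [map_smul] using T.smul_mem c hx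

theorem sing_mem_supported {S : Set (RBWord X)} {w : RBWord X} (hw : w ∈ S) :
    sing k w ∈ Finsupp.supported k k S :=
  Finsupp.single_mem_supported k 1 hw

end Ext

namespace FreeRBAData

variable {k : Type v} [CommRing k] {X : Type u} {lam : k} (D : FreeRBAData k X lam)

theorem one_val : (RBWord.one : RBWord X).1 = [] := rfl

theorem d_one_left (x : RBMod k X) : D.d (sing k RBWord.one) x = x := by
  have : D.d (sing k RBWord.one) = LinearMap.id := by
    refine Finsupp.lhom_ext fun w b => ?_
    rw [single_eq_smul_sing, map_smul, map_smul]
    have hv : RBL.wordValid ((RBWord.one : RBWord X).1 ++ w.1) := w.2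
    rw [D.d_concat RBWord.one w hv, LinearMap.id_apply]
    exact congrArg _ (sing_congr _ _ rfl)
  rw [this, LinearMap.id_apply]

theorem d_one_right (x : RBMod k X) : D.d x (sing k RBWord.one) = x := by
  have : D.d.flip (sing k RBWord.one) = LinearMap.id := by
    refine Finsupp.lhom_ext fun w b => ?_
    rw [single_eq_smul_sing, map_smul, map_smul]
    have hv : RBL.wordValid (w.1 ++ (RBWord.one : RBWord X).1) := by
      rw [one_val, List.append_nil]; exact w.2
    rw [LinearMap.flip_apply, D.d_concat w RBWord.one hv, LinearMap.id_apply]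
    congr 1
    exact sing_congr _ _ (by rw [one_val, List.append_nil])
  have := congrFun (congrArg DFunLike.coe this) x
  simpa using this

/-- The element `⌊ā⌋ ⋄ b̄ + ā ⋄ ⌊b̄⌋ + λ ā ⋄ b̄` whose bracket is `⌊ā⌋ ⋄ ⌊b̄⌋`. -/
noncomputable def Kel (x y : RBMod k X) : RBMod k X :=
  D.d (Pop k X x) y + D.d x (Pop k X y) + lam • D.d x y

theorem Kel_bilinear_left (x x' y : RBMod k X) :
    D.Kel (x + x') y = D.Kel x y + D.Kel x' y := by
  simp [Kel, map_add, LinearMap.add_apply, smul_add]; abel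

/-- `⌊x⌋ ⋄ ⌊y⌋ = ⌊Kel x y⌋` for all `x, y`. -/
theorem d_PP (x y : RBMod k X) :
    D.d (Pop k X x) (Pop k X y) = Pop k X (D.Kel x y) := by
  have key : D.d.compl₁₂ (Pop k X) (Pop k X) =
      ((D.d.compl₁₂ (Pop k X) LinearMap.id).compr₂ (Pop k X)
        + (D.d.compl₁₂ LinearMap.id (Pop k X)).compr₂ (Pop k X)
        + lam • (D.d.compr₂ (Pop k X))) := by
    refine lhom_ext₂ fun a b => ?_
    simp only [LinearMap.compl₁₂_apply, LinearMap.compr₂_apply, LinearMap.add_apply,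
      LinearMap.smul_apply, LinearMap.id_apply]
    rw [Pop_sing a, Pop_sing b]
    have hu : RBL.wordValid ([] ++ [RBL.br a.1]) := RBL.wordValid_br a.2
    have hv : RBL.wordValid (RBL.br b.1 :: ([] : List (RBL X))) := RBL.wordValid_br b.2
    have := D.d_br [] [] a b hu hv
    rw [show (⟨[] ++ [RBL.br a.1], hu⟩ : RBWord X) = ⟨[RBL.br a.1], RBL.wordValid_br a.2⟩ from
      rfl] at this
    rw [show (⟨RBL.br b.1 :: [], hv⟩ : RBWord X) = ⟨[RBL.br b.1], RBL.wordValid_br b.2⟩ from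
      rfl] at this
    rw [this, concatLR_nil_nil]
    simp [Pop_sing, map_add, map_smul]
  have := congrFun (congrArg DFunLike.coe (congrFun (congrArg DFunLike.coe key) x)) y
  simpa [Kel, map_add, map_smul] using this

end FreeRBAData

section Decomp

variable {k : Type v} [CommRing k] {X : Type u}

theorem RBL.valid_of_mem {l : List (RBL X)} (h : RBL.wordValid l) {a : RBL X}
    (ha : a ∈ l) : RBL.valid a := ((RBL.wordValid_iff l).1 h).1 a ha

theorem sing_eq_of {u : RBWord X} {l : List (RBL X)} (h : u.1 = l)
    (hl : RBL.wordValid l) : sing k u = sing k ⟨l, hl⟩ := by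
  cases u; exact sing_congr _ _ h

/-- Dichotomy: either the concatenation of two nonempty words is valid, or
both junction letters are brackets. -/
theorem concat_or_br (u v : RBWord X) (hu : u.1 ≠ []) (hv : v.1 ≠ []) :
    RBL.wordValid (u.1 ++ v.1) ∨
    ∃ (u₀ : List (RBL X)) (a : RBWord X) (b : RBWord X) (v₀ : List (RBL X)),
      u.1 = u₀ ++ [RBL.br a.1] ∧ v.1 = RBL.br b.1 :: v₀ := by
  obtain h | ⟨u₀, α, hU⟩ := List.eq_nil_or_concat u.1
  · exact absurd h hu
  rw [List.concat_eq_append] at hU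
  obtain hV | ⟨β, v₀, hV⟩ : v.1 = [] ∨ ∃ β v₀, v.1 = β :: v₀ := by
    cases h : v.1 with
    | nil => exact Or.inl rfl
    | cons a l => exact Or.inr ⟨a, l, rfl⟩
  · exact absurd hV hv
  by_cases hbr : α.isBr = true ∧ β.isBr = true
  · right
    obtain ⟨la, rfl⟩ : ∃ la, α = RBL.br la := by
      cases α with
      | var x => simp [RBL.isBr] at hbr
      | br la => exact ⟨la, rfl⟩
    obtain ⟨lb, rfl⟩ : ∃ lb, β = RBL.br lb := by
      cases β with
      | var x => simp [RBL.isBr] at hbr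
      | br lb => exact ⟨lb, rfl⟩
    have hva : RBL.wordValid la := by
      have := RBL.valid_of_mem (hU ▸ u.2) (a := RBL.br la) (by simp)
      simpa [RBL.valid] using this
    have hvb : RBL.wordValid lb := by
      have := RBL.valid_of_mem (hV ▸ v.2) (a := RBL.br lb) (by simp)
      simpa [RBL.valid] using this
    exact ⟨u₀, ⟨la, hva⟩, ⟨lb, hvb⟩, v₀, hU, hV⟩
  · left
    refine RBL.wordValid_append_iff.2 ⟨u.2, v.2, ?_⟩
    intro x hx y hy
    rw [hU, List.getLast?_concat] at hx
    rw [hV] at hy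
    simp only [List.head?_cons, Option.mem_def, Option.some.injEq] at hx hy
    subst hx; subst hy
    exact hbr

end Decomp

namespace FreeRBAData

variable {k : Type v} [CommRing k] {X : Type u} {lam : k} (D : FreeRBAData k X lam)

theorem Pop_Kel (x y : RBMod k X) :
    Pop k X (D.Kel x y) = Pop k X (D.d (Pop k X x) y) + Pop k X (D.d x (Pop k X y))
      + lam • Pop k X (D.d x y) := by
  simp [Kel, map_add, map_smul]

/-- The bracket-bracket case of the product, in a convenient form. -/
theorem d_br' (u v : RBWord X) (u₀ v₀ : List (RBL X)) (a b : RBWord X)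
    (hU : u.1 = u₀ ++ [RBL.br a.1]) (hV : v.1 = RBL.br b.1 :: v₀) :
    D.d (sing k u) (sing k v)
      = concatLR k X u₀ v₀ (Pop k X (D.Kel (sing k a) (sing k b))) := by
  have hu : RBL.wordValid (u₀ ++ [RBL.br a.1]) := hU ▸ u.2
  have hv : RBL.wordValid (RBL.br b.1 :: v₀) := hV ▸ v.2
  rw [sing_eq_of hU hu, sing_eq_of hV hv, D.d_br u₀ v₀ a b hu hv, Pop_Kel]

end FreeRBAData

section Fil

/-- The filtration of `kX_∞` by total degree. -/
noncomputable def Fil (n : ℕ) : Submodule k (RBMod k X) :=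
  Finsupp.supported k k {w : RBWord X | w.deg ≤ n}

variable {k} {X}

theorem Fil_mono {m n : ℕ} (h : m ≤ n) : Fil k X m ≤ Fil k X n :=
  Finsupp.supported_mono fun w hw => le_trans hw h

theorem sing_mem_Fil {w : RBWord X} {n : ℕ} (h : w.deg ≤ n) :
    sing k w ∈ Fil k X n := sing_mem_supported h

theorem deg_br (w : RBWord X) :
    RBWord.deg (⟨[RBL.br w.1], RBL.wordValid_br w.2⟩ : RBWord X) = w.deg + 1 := by
  simp [RBWord.deg, RBL.degW, RBL.degL]

theorem Pop_mem_Fil {x : RBMod k X} {n : ℕ} (h : x ∈ Fil k X n) :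
    Pop k X x ∈ Fil k X (n + 1) := by
  refine mem_supported_of _ (Pop k X) _ (fun w hw => ?_) h
  rw [Pop_sing]
  exact sing_mem_Fil (by rw [deg_br]; exact Nat.add_le_add_right hw 1)

theorem concatLR_mem_Fil {x : RBMod k X} {n : ℕ} (p q : List (RBL X)) (h : x ∈ Fil k X n) :
    concatLR k X p q x ∈ Fil k X (RBL.degW p + n + RBL.degW q) := by
  refine mem_supported_of _ (concatLR k X p q) _ (fun w hw => ?_) h
  by_cases hv : RBL.wordValid (p ++ w.1 ++ q)
  · rw [concatLR_sing p q w hv]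
    refine sing_mem_Fil ?_
    show RBL.degW (p ++ w.1 ++ q) ≤ _
    rw [RBL.degW_append, RBL.degW_append]
    exact Nat.add_le_add_right (Nat.add_le_add_left hw _) _
  · rw [concatLR_sing_invalid p q w hv]; exact Submodule.zero_mem _

variable {lam : k} (D : FreeRBAData k X lam)

theorem deg_eq (w : RBWord X) : w.deg = RBL.degW w.1 := rfl

/-- The product of two basis words of degrees `p`, `q` lies in degrees `≤ p + q`. -/
theorem FreeRBAData.d_mem_Fil :
    ∀ (n : ℕ) (u v : RBWord X), u.deg + v.deg ≤ n →
      D.d (sing k u) (sing k v) ∈ Fil k X (u.deg + v.deg) := by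
  intro n
  induction n with
  | zero =>
    intro u v h
    -- both degrees are 0
    by_cases hv : RBL.wordValid (u.1 ++ v.1)
    · rw [D.d_concat u v hv]
      exact sing_mem_Fil (le_of_eq (RBL.degW_append u.1 v.1))
    · exfalso
      -- if u or v empty, concat is valid
      rcases List.eq_nil_or_concat u.1 with h1 | ⟨u₀, α, h1⟩
      · exact hv (by rw [h1]; exact v.2)
      · -- u nonempty has positive degree, contradiction with h
        have : 1 ≤ u.deg := by
          rw [deg_eq, h1, List.concat_eq_append, RBL.degW_append]
          cases α <;> simp [RBL.degW, RBL.degL] <;> omega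
        omega
  | succ n ih =>
    intro u v h
    rcases Nat.lt_or_ge (u.deg + v.deg) (n + 1) with hlt | hge
    · exact ih u v (Nat.lt_succ_iff.mp hlt)
    have heq : u.deg + v.deg = n + 1 := le_antisymm h hge
    by_cases hval : RBL.wordValid (u.1 ++ v.1)
    · rw [D.d_concat u v hval]
      exact sing_mem_Fil (le_of_eq (RBL.degW_append u.1 v.1))
    · have hune : u.1 ≠ [] := by
        intro h1; exact hval (by rw [h1]; exact v.2)
      have hvne : v.1 ≠ [] := by
        intro h1
        refine hval ?_
        rw [h1, List.append_nil]; exact u.2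
      rcases concat_or_br u v hune hvne with h1 | ⟨u₀, a, b, v₀, hU, hV⟩
      · exact absurd h1 hval
      rw [D.d_br' u v u₀ v₀ a b hU hV]
      -- degree bookkeeping
      have hdu : u.deg = RBL.degW u₀ + a.deg + 1 := by
        rw [deg_eq, hU, RBL.degW_append]
        simp [RBL.degW, RBL.degL, deg_eq]
        ring
      have hdv : v.deg = b.deg + 1 + RBL.degW v₀ := by
        rw [deg_eq, hV, show RBL.br b.1 :: v₀ = [RBL.br b.1] ++ v₀ from rfl,
          RBL.degW_append]
        simp [RBL.degW, RBL.degL, deg_eq]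
        try ring
      have hab : a.deg + 1 + b.deg ≤ n := by omega
      have braw : RBWord.deg (⟨[RBL.br a.1], RBL.wordValid_br a.2⟩ : RBWord X) = a.deg + 1 :=
        deg_br a
      have brbw : RBWord.deg (⟨[RBL.br b.1], RBL.wordValid_br b.2⟩ : RBWord X) = b.deg + 1 :=
        deg_br b
      have m1 : D.d (Pop k X (sing k a)) (sing k b) ∈ Fil k X (a.deg + 1 + b.deg) := by
        rw [Pop_sing]
        have := ih ⟨[RBL.br a.1], RBL.wordValid_br a.2⟩ b (by rw [braw]; omega)
        rwa [braw] at this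
      have m2 : D.d (sing k a) (Pop k X (sing k b)) ∈ Fil k X (a.deg + 1 + b.deg) := by
        rw [Pop_sing]
        have := ih a ⟨[RBL.br b.1], RBL.wordValid_br b.2⟩ (by rw [brbw]; omega)
        rw [brbw] at this
        rwa [show a.deg + (b.deg + 1) = a.deg + 1 + b.deg by ring] at this
      have m3 : D.d (sing k a) (sing k b) ∈ Fil k X (a.deg + 1 + b.deg) := by
        refine Fil_mono (by omega) (ih a b (by omega))
      have hK : D.Kel (sing k a) (sing k b) ∈ Fil k X (a.deg + 1 + b.deg) := by
        refine Submodule.add_mem _ (Submodule.add_mem _ m1 m2) (Submodule.smul_mem _ _ m3)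
      have hP := Pop_mem_Fil hK
      have := concatLR_mem_Fil u₀ v₀ hP
      refine Fil_mono (le_of_eq ?_) this
      omega

end Fil

section ConcatLemmas

variable {k : Type v} [CommRing k] {X : Type u} {lam : k} (D : FreeRBAData k X lam)

theorem RBL.altR_iff {a b : RBL X} : RBL.altR a b ↔ ¬(a.isBr = true ∧ b.isBr = true) :=
  Iff.rfl

/-- Replacing the bracket at a junction spot keeps validity. -/
theorem wordValid_mid {p q c : List (RBL X)} {e : List (RBL X)}
    (h1 : RBL.wordValid (p ++ [RBL.br c])) (h2 : RBL.wordValid (RBL.br e :: q))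
    (m : RBWord X) : RBL.wordValid (p ++ [RBL.br m.1] ++ q) := by
  rw [List.append_assoc]
  obtain ⟨hp, hc, hj⟩ := RBL.wordValid_append_iff.1 h1
  have h2' : RBL.wordValid ([RBL.br e] ++ q) := h2
  obtain ⟨he, hq, hj2⟩ := RBL.wordValid_append_iff.1 h2'
  refine RBL.wordValid_append_iff.2 ⟨hp, ?_, ?_⟩
  · refine RBL.wordValid_append_iff.2 ⟨RBL.wordValid_br m.2, hq, ?_⟩
    intro x hx y hy
    simp only [List.getLast?_singleton, Option.mem_def, Option.some.injEq] at hx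
    subst hx
    have := hj2 (RBL.br e) (by simp) y hy
    simpa [RBL.altR, RBL.isBr] using this
  · intro x hx y hy
    have hc' := hj x hx (RBL.br c) (by simp)
    simp only [List.cons_append, List.nil_append, List.head?_cons, Option.mem_def,
      Option.some.injEq] at hy
    subst hy
    simpa [RBL.altR, RBL.isBr] using hc'

/-- Case II helper: prepending a word `u` through a `concatLR`-image. -/
theorem d_sing_concatLR (u : RBWord X) (v₀ w' : List (RBL X))
    (hmid : ∀ m : RBWord X, RBL.wordValid (v₀ ++ [RBL.br m.1] ++ w'))
    (hall : ∀ m : RBWord X, RBL.wordValid (u.1 ++ (v₀ ++ [RBL.br m.1] ++ w')))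
    (y : RBMod k X) :
    D.d (sing k u) (concatLR k X v₀ w' (Pop k X y))
      = concatLR k X (u.1 ++ v₀) w' (Pop k X y) := by
  induction y using Finsupp.induction_linear with
  | zero => simp [map_zero]
  | add a b ha hb => simp only [map_add, ha, hb]
  | single m b =>
    rw [single_eq_smul_sing, map_smul, map_smul, map_smul, map_smul]
    congr 1
    rw [Pop_sing]
    have h1 : RBL.wordValid (v₀ ++ (⟨[RBL.br m.1], RBL.wordValid_br m.2⟩ : RBWord X).1
        ++ w') := hmid m
    rw [concatLR_sing v₀ w' _ h1, D.d_concat u ⟨_, h1⟩ (hall m)]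
    have h2 : RBL.wordValid ((u.1 ++ v₀) ++ (⟨[RBL.br m.1],
        RBL.wordValid_br m.2⟩ : RBWord X).1 ++ w') := by
      have := hall m
      simpa [List.append_assoc] using this
    rw [concatLR_sing (u.1 ++ v₀) w' _ h2]
    exact sing_congr _ _ (by simp [List.append_assoc])

/-- Case III helper: appending a word `w` through a `concatLR`-image. -/
theorem concatLR_d_sing (w : RBWord X) (u₀ v' : List (RBL X))
    (hmid : ∀ m : RBWord X, RBL.wordValid (u₀ ++ [RBL.br m.1] ++ v'))
    (hall : ∀ m : RBWord X, RBL.wordValid ((u₀ ++ [RBL.br m.1] ++ v') ++ w.1))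
    (y : RBMod k X) :
    D.d (concatLR k X u₀ v' (Pop k X y)) (sing k w)
      = concatLR k X u₀ (v' ++ w.1) (Pop k X y) := by
  induction y using Finsupp.induction_linear with
  | zero => simp [map_zero]
  | add a b ha hb =>
    simp only [map_add, LinearMap.add_apply, ha, hb]
  | single m b =>
    rw [single_eq_smul_sing, map_smul, map_smul, map_smul, LinearMap.smul_apply, map_smul]
    congr 1
    rw [Pop_sing]
    have h1 : RBL.wordValid (u₀ ++ (⟨[RBL.br m.1], RBL.wordValid_br m.2⟩ : RBWord X).1
        ++ v') := hmid m
    rw [concatLR_sing u₀ v' _ h1, D.d_concat ⟨_, h1⟩ w (hall m)]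
    have h2 : RBL.wordValid (u₀ ++ (⟨[RBL.br m.1],
        RBL.wordValid_br m.2⟩ : RBWord X).1 ++ (v' ++ w.1)) := by
      have := hall m
      simpa [List.append_assoc] using this
    rw [concatLR_sing u₀ (v' ++ w.1) _ h2]
    exact sing_congr _ _ (by simp [List.append_assoc])

end ConcatLemmas

section AssocPrep

variable {k : Type v} [CommRing k] {X : Type u} {lam : k} (D : FreeRBAData k X lam)

theorem RBWord.deg_pos {u : RBWord X} (h : u.1 ≠ []) : 1 ≤ u.deg := by
  rcases List.eq_nil_or_concat u.1 with h1 | ⟨u₀, α, h1⟩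
  · exact absurd h1 h
  · rw [deg_eq, h1, List.concat_eq_append, RBL.degW_append]
    cases α <;> simp [RBL.degW, RBL.degL] <;> omega

theorem wordValid_triple {u v w : RBWord X} (hUV : RBL.wordValid (u.1 ++ v.1))
    (hVW : RBL.wordValid (v.1 ++ w.1)) (hv : v.1 ≠ []) :
    RBL.wordValid (u.1 ++ v.1 ++ w.1) := by
  rw [List.append_assoc]
  obtain ⟨hu2, hv2, hj1⟩ := RBL.wordValid_append_iff.1 hUV
  refine RBL.wordValid_append_iff.2 ⟨hu2, hVW, ?_⟩
  intro x hx y hy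
  refine hj1 x hx y ?_
  rwa [List.head?_append_of_ne_nil _ hv] at hy

end AssocPrep

namespace FreeRBAData

variable {k : Type v} [CommRing k] {X : Type u} {lam : k} (D : FreeRBAData k X lam)

theorem Kel_add_left (x y z : RBMod k X) :
    D.Kel (x + y) z = D.Kel x z + D.Kel y z := D.Kel_bilinear_left x y z

theorem Kel_add_right (x y z : RBMod k X) :
    D.Kel x (y + z) = D.Kel x y + D.Kel x z := by
  simp [Kel, map_add, smul_add]; abel

theorem Kel_smul_left (c : k) (x z : RBMod k X) :
    D.Kel (c • x) z = c • D.Kel x z := by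
  simp [Kel, map_smul, smul_add, smul_comm c lam]

theorem Kel_smul_right (c : k) (x z : RBMod k X) :
    D.Kel x (c • z) = c • D.Kel x z := by
  simp [Kel, map_smul, smul_add, smul_comm c lam]

theorem Kel_zero_left (z : RBMod k X) : D.Kel 0 z = 0 := by
  simp [Kel, map_zero]

theorem Kel_zero_right (z : RBMod k X) : D.Kel z 0 = 0 := by
  simp [Kel, map_zero]

theorem d_fil (u v : RBWord X) :
    D.d (sing k u) (sing k v) ∈ Fil k X (u.deg + v.deg) :=
  D.d_mem_Fil _ u v le_rfl

theorem Kel_mem_Fil (a b : RBWord X) :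
    D.Kel (sing k a) (sing k b) ∈ Fil k X (a.deg + b.deg + 1) := by
  have braw : RBWord.deg (⟨[RBL.br a.1], RBL.wordValid_br a.2⟩ : RBWord X) = a.deg + 1 :=
    deg_br a
  have brbw : RBWord.deg (⟨[RBL.br b.1], RBL.wordValid_br b.2⟩ : RBWord X) = b.deg + 1 :=
    deg_br b
  have m1 : D.d (Pop k X (sing k a)) (sing k b) ∈ Fil k X (a.deg + b.deg + 1) := by
    rw [Pop_sing]
    have := D.d_fil ⟨[RBL.br a.1], RBL.wordValid_br a.2⟩ b
    rw [braw] at this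
    exact Fil_mono (by omega) this
  have m2 : D.d (sing k a) (Pop k X (sing k b)) ∈ Fil k X (a.deg + b.deg + 1) := by
    rw [Pop_sing]
    have := D.d_fil a ⟨[RBL.br b.1], RBL.wordValid_br b.2⟩
    rw [brbw] at this
    exact Fil_mono (by omega) this
  have m3 : D.d (sing k a) (sing k b) ∈ Fil k X (a.deg + b.deg + 1) :=
    Fil_mono (by omega) (D.d_fil a b)
  exact Submodule.add_mem _ (Submodule.add_mem _ m1 m2) (Submodule.smul_mem _ _ m3)

end FreeRBAData

namespace FreeRBAData

variable {k : Type v} [CommRing k] {X : Type u} {lam : k} (D : FreeRBAData k X lam)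

theorem d_assoc_aux : ∀ (n L : ℕ) (u v w : RBWord X),
    u.deg + v.deg + w.deg ≤ n → v.1.length ≤ L →
    D.d (D.d (sing k u) (sing k v)) (sing k w)
      = D.d (sing k u) (D.d (sing k v) (sing k w)) := by
  intro n
  induction n using Nat.strong_induction_on with
  | _ n ihn =>
  intro L
  induction L using Nat.strong_induction_on with
  | _ L ihL =>
  intro u v w hn hL
  by_cases hu0 : u.1 = []
  · have h1 : sing k u = sing k RBWord.one := sing_eq_of hu0 RBL.wordValid_nil
    rw [h1, D.d_one_left, D.d_one_left]
  by_cases hv0 : v.1 = []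
  · have h1 : sing k v = sing k RBWord.one := sing_eq_of hv0 RBL.wordValid_nil
    rw [h1, D.d_one_right, D.d_one_left]
  by_cases hw0 : w.1 = []
  · have h1 : sing k w = sing k RBWord.one := sing_eq_of hw0 RBL.wordValid_nil
    rw [h1, D.d_one_right, D.d_one_right]
  rcases concat_or_br u v hu0 hv0 with hUV | ⟨u₀, a, b, v₀, hU, hV⟩
  · rcases concat_or_br v w hv0 hw0 with hVW | ⟨v₀', c, dd, w₀', hV', hW⟩
    · -- Case I: both concatenations valid
      have h3 : RBL.wordValid (u.1 ++ v.1 ++ w.1) := wordValid_triple hUV hVW hv0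
      have hUVw : RBL.wordValid ((⟨u.1 ++ v.1, hUV⟩ : RBWord X).1 ++ w.1) := h3
      have hVWu : RBL.wordValid (u.1 ++ (⟨v.1 ++ w.1, hVW⟩ : RBWord X).1) := by
        show RBL.wordValid (u.1 ++ (v.1 ++ w.1))
        rw [← List.append_assoc]; exact h3
      rw [D.d_concat u v hUV, D.d_concat _ w hUVw, D.d_concat v w hVW,
        D.d_concat u _ hVWu]
      exact sing_congr _ _ (List.append_assoc _ _ _)
    · -- Case II
      have hv2 : RBL.wordValid (v₀' ++ [RBL.br c.1]) := hV' ▸ v.2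
      have hw2 : RBL.wordValid (RBL.br dd.1 :: w₀') := hW ▸ w.2
      have hmid : ∀ m : RBWord X, RBL.wordValid (v₀' ++ [RBL.br m.1] ++ w₀') :=
        fun m => wordValid_mid hv2 hw2 m
      have huv' : RBL.wordValid ((u.1 ++ v₀') ++ [RBL.br c.1]) := by
        have h4 := hUV
        rw [hV', ← List.append_assoc] at h4
        exact h4
      have hall : ∀ m : RBWord X, RBL.wordValid (u.1 ++ (v₀' ++ [RBL.br m.1] ++ w₀')) :=
        fun m => by
          have h4 := wordValid_mid huv' hw2 m
          rw [List.append_assoc, List.append_assoc] at h4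
          rw [List.append_assoc]
          exact h4
      rw [D.d_br' v w v₀' w₀' c dd hV' hW,
        d_sing_concatLR D u v₀' w₀' hmid hall (D.Kel (sing k c) (sing k dd)),
        D.d_concat u v hUV,
        D.d_br' ⟨u.1 ++ v.1, hUV⟩ w (u.1 ++ v₀') w₀' c dd
          (by show u.1 ++ v.1 = _; rw [hV', ← List.append_assoc]) hW]
  · rcases concat_or_br v w hv0 hw0 with hVW | ⟨v₀', c, dd, w₀', hV', hW⟩
    · -- Case III
      have hu2 : RBL.wordValid (u₀ ++ [RBL.br a.1]) := hU ▸ u.2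
      have hv2 : RBL.wordValid (RBL.br b.1 :: v₀) := hV ▸ v.2
      have hmid : ∀ m : RBWord X, RBL.wordValid (u₀ ++ [RBL.br m.1] ++ v₀) :=
        fun m => wordValid_mid hu2 hv2 m
      have hVW' : RBL.wordValid (RBL.br b.1 :: (v₀ ++ w.1)) := by
        have h4 := hVW
        rw [hV] at h4
        rwa [List.cons_append] at h4
      have hall : ∀ m : RBWord X, RBL.wordValid ((u₀ ++ [RBL.br m.1] ++ v₀) ++ w.1) :=
        fun m => by
          have h4 := wordValid_mid hu2 hVW' m
          simp only [List.append_assoc] at h4 ⊢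
          exact h4
      rw [D.d_br' u v u₀ v₀ a b hU hV,
        concatLR_d_sing D w u₀ v₀ hmid hall (D.Kel (sing k a) (sing k b)),
        D.d_concat v w hVW,
        D.d_br' u ⟨v.1 ++ w.1, hVW⟩ u₀ (v₀ ++ w.1) a b hU
          (by show v.1 ++ w.1 = _; rw [hV, List.cons_append])]
    · -- Case IV: all four junction letters are brackets
      have hu2 : RBL.wordValid (u₀ ++ [RBL.br a.1]) := hU ▸ u.2
      have hw2 : RBL.wordValid (RBL.br dd.1 :: w₀') := hW ▸ w.2
      have hdu : u.deg = RBL.degW u₀ + a.deg + 1 := by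
        rw [deg_eq, hU, RBL.degW_append]
        simp [RBL.degW, RBL.degL, deg_eq]
        ring
      have hdw : w.deg = dd.deg + 1 + RBL.degW w₀' := by
        rw [deg_eq, hW, show RBL.br dd.1 :: w₀' = [RBL.br dd.1] ++ w₀' from rfl,
          RBL.degW_append]
        simp [RBL.degW, RBL.degL, deg_eq]
        try ring
      by_cases hv₀0 : v₀ = []
      · -- Case IVb : `v` is a single bracket
        subst hv₀0
        have hv1 : v.1 = [RBL.br b.1] := hV
        have hb1 : RBL.wordValid [RBL.br b.1] := RBL.wordValid_br b.2
        have hdv : v.deg = b.deg + 1 := by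
          rw [deg_eq, hv1]
          simp [RBL.degW, RBL.degL, deg_eq]
        have claim1 : ∀ y : RBMod k X,
            D.d (concatLR k X u₀ [] (Pop k X y)) (sing k w)
              = concatLR k X u₀ w₀' (Pop k X (D.Kel y (sing k dd))) := by
          intro y
          induction y using Finsupp.induction_linear with
          | zero => simp [map_zero, D.Kel_zero_left]
          | add p q hp hq =>
            simp only [map_add, LinearMap.add_apply, D.Kel_add_left, hp, hq]
          | single m bb =>
            simp only [single_eq_smul_sing, map_smul, LinearMap.smul_apply,
              D.Kel_smul_left]
            congr 1
            rw [Pop_sing]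
            have h1 : RBL.wordValid (u₀ ++ (⟨[RBL.br m.1], RBL.wordValid_br m.2⟩ :
                RBWord X).1 ++ ([] : List (RBL X))) :=
              wordValid_mid hu2 hb1 m
            rw [concatLR_sing u₀ [] _ h1]
            rw [D.d_br' ⟨_, h1⟩ w u₀ w₀' m dd (by simp) hW]
        have claim2 : ∀ y : RBMod k X,
            D.d (sing k u) (concatLR k X [] w₀' (Pop k X y))
              = concatLR k X u₀ w₀' (Pop k X (D.Kel (sing k a) y)) := by
          intro y
          induction y using Finsupp.induction_linear with
          | zero => simp [map_zero, D.Kel_zero_right]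
          | add p q hp hq =>
            simp only [map_add, D.Kel_add_right, hp, hq]
          | single m bb =>
            simp only [single_eq_smul_sing, map_smul, LinearMap.smul_apply,
              D.Kel_smul_right]
            congr 1
            rw [Pop_sing]
            have h1 : RBL.wordValid (([] : List (RBL X)) ++ (⟨[RBL.br m.1],
                RBL.wordValid_br m.2⟩ : RBWord X).1 ++ w₀') :=
              wordValid_mid (show RBL.wordValid (([] : List (RBL X)) ++ [RBL.br dd.1])
                from RBL.wordValid_br dd.2) hw2 m
            rw [concatLR_sing [] w₀' _ h1]
            rw [D.d_br' u ⟨_, h1⟩ u₀ w₀' a m hU (by simp)]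
        -- the core Rota-Baxter computation
        have hbound : a.deg + 1 + (b.deg + 1) + dd.deg < n := by omega
        have asc : ∀ (x y z : RBWord X),
            x.deg + y.deg + z.deg ≤ a.deg + 1 + (b.deg + 1) + dd.deg →
            D.d (D.d (sing k x) (sing k y)) (sing k z)
              = D.d (sing k x) (D.d (sing k y) (sing k z)) :=
          fun x y z h => ihn _ hbound _ x y z h le_rfl
        set A : RBWord X := ⟨[RBL.br a.1], RBL.wordValid_br a.2⟩ with hA
        set B : RBWord X := ⟨[RBL.br b.1], RBL.wordValid_br b.2⟩ with hB
        set Dw : RBWord X := ⟨[RBL.br dd.1], RBL.wordValid_br dd.2⟩ with hDw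
        have degA : A.deg = a.deg + 1 := deg_br a
        have degB : B.deg = b.deg + 1 := deg_br b
        have degD : Dw.deg = dd.deg + 1 := deg_br dd
        have hPa : Pop k X (sing k a) = sing k A := Pop_sing a
        have hPb : Pop k X (sing k b) = sing k B := Pop_sing b
        have hPd : Pop k X (sing k dd) = sing k Dw := Pop_sing dd
        have h1 := asc A B dd (by omega)
        have h2 := asc A b Dw (by omega)
        have h3 := asc a B Dw (by omega)
        have h4 := asc a b Dw (by omega)
        have h5 := asc A b dd (by omega)
        have h6 := asc a B dd (by omega)
        have h7 := asc a b dd (by omega)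
        have e1 : Pop k X (D.d (Pop k X (sing k a)) (sing k b)
              + D.d (sing k a) (Pop k X (sing k b)) + lam • D.d (sing k a) (sing k b))
            = D.d (Pop k X (sing k a)) (Pop k X (sing k b)) := by
          have := (D.d_PP (sing k a) (sing k b)).symm
          simpa [Kel] using this
        have e2 : Pop k X (D.d (Pop k X (sing k b)) (sing k dd)
              + D.d (sing k b) (Pop k X (sing k dd)) + lam • D.d (sing k b) (sing k dd))
            = D.d (Pop k X (sing k b)) (Pop k X (sing k dd)) := by
          have := (D.d_PP (sing k b) (sing k dd)).symm
          simpa [Kel] using this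
        have core : D.Kel (D.Kel (sing k a) (sing k b)) (sing k dd)
            = D.Kel (sing k a) (D.Kel (sing k b) (sing k dd)) := by
          simp only [Kel]
          rw [e1, e2]
          simp only [map_add, map_smul, LinearMap.add_apply, LinearMap.smul_apply,
            smul_add]
          rw [hPa, hPb, hPd]
          rw [h1, h2, h3, h4, h5, h6, h7]
          abel
        rw [D.d_br' u v u₀ [] a b hU hV, claim1 (D.Kel (sing k a) (sing k b)),
          D.d_br' v w [] w₀' b dd hv1 hW, claim2 (D.Kel (sing k b) (sing k dd)), core]
      · -- Case IVa : `v` has at least two letters; peel the last letter off `v`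
        rcases hveq : v₀' with _ | ⟨x, v₁⟩
        · exfalso
          rw [hveq] at hV'
          rw [hV] at hV'
          simp only [List.nil_append] at hV'
          injection hV' with h1 h2
          exact hv₀0 h2
        · rw [hveq] at hV'
          have hV'' := hV'
          rw [hV, List.cons_append] at hV''
          injection hV'' with hxb hv₀1
          subst hxb
          -- set up the two split words
          have hvL : RBL.wordValid (RBL.br b.1 :: v₁) := by
            have h4 := hV' ▸ v.2
            exact (RBL.wordValid_append_iff.1 h4).1
          set vL : RBWord X := ⟨RBL.br b.1 :: v₁, hvL⟩ with hvLdef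
          set vR : RBWord X := ⟨[RBL.br c.1], RBL.wordValid_br c.2⟩ with hvRdef
          have hvsplit : RBL.wordValid (vL.1 ++ vR.1) := hV' ▸ v.2
          have hsplit : D.d (sing k vL) (sing k vR) = sing k v := by
            rw [D.d_concat vL vR hvsplit]
            exact (sing_eq_of hV' hvsplit).symm
          have hdegsplit : vL.deg + vR.deg = v.deg := by
            rw [deg_eq, deg_eq, deg_eq, hV', RBL.degW_append]
          have hdegw : 1 ≤ w.deg := RBWord.deg_pos hw0
          have hdegu : 1 ≤ u.deg := RBWord.deg_pos hu0
          have hlenv : v.1.length = v₁.length + 2 := by rw [hV']; simp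
          have hL2 : 2 ≤ L := by
            have := hL
            omega
          -- degrees of the pieces
          have hdvL : vL.deg = b.deg + 1 + RBL.degW v₁ := by
            show RBL.degW (RBL.br b.1 :: v₁) = _
            rw [show RBL.br b.1 :: v₁ = [RBL.br b.1] ++ v₁ from rfl, RBL.degW_append]
            simp [RBL.degW, RBL.degL, deg_eq]
            try ring
          have hdvR : vR.deg = c.deg + 1 := by
            show RBL.degW [RBL.br c.1] = _
            simp [RBL.degW, RBL.degL, deg_eq]
          -- step 1
          have step1 : D.d (sing k u) (sing k v)
              = D.d (D.d (sing k u) (sing k vL)) (sing k vR) := by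
            rw [← hsplit]
            exact (ihn (u.deg + vL.deg + vR.deg)
              (by omega) _ u vL vR le_rfl le_rfl).symm
          -- `d u vL` via the bracket formula
          have e_duvL : D.d (sing k u) (sing k vL)
              = concatLR k X u₀ v₁ (Pop k X (D.Kel (sing k a) (sing k b))) :=
            D.d_br' u vL u₀ v₁ a b hU rfl
          have memKAB : Pop k X (D.Kel (sing k a) (sing k b))
              ∈ Fil k X (a.deg + b.deg + 2) := by
            have := Pop_mem_Fil (D.Kel_mem_Fil a b)
            exact this
          -- `d vR w` via the bracket formula
          have e_dvRw : D.d (sing k vR) (sing k w)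
              = concatLR k X [] w₀' (Pop k X (D.Kel (sing k c) (sing k dd))) :=
            D.d_br' vR w [] w₀' c dd rfl hW
          have memKCD : Pop k X (D.Kel (sing k c) (sing k dd))
              ∈ Fil k X (c.deg + dd.deg + 2) := by
            have := Pop_mem_Fil (D.Kel_mem_Fil c dd)
            exact this
          -- claim A
          have claimA : ∀ x ∈ Fil k X (a.deg + b.deg + 2),
              D.d (D.d (concatLR k X u₀ v₁ x) (sing k vR)) (sing k w)
                = D.d (concatLR k X u₀ v₁ x) (D.d (sing k vR) (sing k w)) := by
            intro x hx
            have := eq_on_supported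
              ((D.d.flip (sing k w)).comp ((D.d.flip (sing k vR)).comp
                (concatLR k X u₀ v₁)))
              ((D.d.flip (D.d (sing k vR) (sing k w))).comp (concatLR k X u₀ v₁))
              (fun z hz => ?_) hx
            · simpa using this
            · simp only [LinearMap.comp_apply, LinearMap.flip_apply]
              by_cases hval : RBL.wordValid (u₀ ++ z.1 ++ v₁)
              · rw [concatLR_sing u₀ v₁ z hval]
                refine ihL 1 (by omega) ⟨u₀ ++ z.1 ++ v₁, hval⟩ vR w ?_ (by show List.length [RBL.br c.1] ≤ 1; simp)
                have hz' : z.deg ≤ a.deg + b.deg + 2 := hz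
                have hdegZ : RBWord.deg (⟨u₀ ++ z.1 ++ v₁, hval⟩ : RBWord X)
                    = RBL.degW u₀ + z.deg + RBL.degW v₁ := by
                  show RBL.degW (u₀ ++ z.1 ++ v₁) = _
                  rw [RBL.degW_append, RBL.degW_append]
                  rfl
                have hdv : v.deg = b.deg + 1 + RBL.degW v₁ + (c.deg + 1) := by
                  rw [deg_eq, hV', RBL.degW_append,
                    show RBL.br b.1 :: v₁ = [RBL.br b.1] ++ v₁ from rfl,
                    RBL.degW_append]
                  simp [RBL.degW, RBL.degL, deg_eq]
                  try ring
                rw [hdegZ, hdvR]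
                omega
              · rw [concatLR_sing_invalid u₀ v₁ z hval]
                simp
          -- claim B
          have claimB : ∀ x ∈ Fil k X (c.deg + dd.deg + 2),
              D.d (D.d (sing k u) (sing k vL)) (concatLR k X [] w₀' x)
                = D.d (sing k u) (D.d (sing k vL) (concatLR k X [] w₀' x)) := by
            intro x hx
            have := eq_on_supported
              ((D.d (D.d (sing k u) (sing k vL))).comp (concatLR k X [] w₀'))
              ((D.d (sing k u)).comp ((D.d (sing k vL)).comp (concatLR k X [] w₀')))
              (fun z hz => ?_) hx
            · simpa using this
            · simp only [LinearMap.comp_apply]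
              by_cases hval : RBL.wordValid (([] : List (RBL X)) ++ z.1 ++ w₀')
              · rw [concatLR_sing [] w₀' z hval]
                refine ihL (L - 1) (by omega) u vL ⟨[] ++ z.1 ++ w₀', hval⟩ ?_ ?_
                · have hz' : z.deg ≤ c.deg + dd.deg + 2 := hz
                  have hdegZ : RBWord.deg (⟨[] ++ z.1 ++ w₀', hval⟩ : RBWord X)
                      = z.deg + RBL.degW w₀' := by
                    show RBL.degW ([] ++ z.1 ++ w₀') = _
                    rw [RBL.degW_append, RBL.degW_append]
                    simp [RBL.degW, deg_eq]
                  have hdv : v.deg = b.deg + 1 + RBL.degW v₁ + (c.deg + 1) := by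
                    rw [deg_eq, hV', RBL.degW_append,
                      show RBL.br b.1 :: v₁ = [RBL.br b.1] ++ v₁ from rfl,
                      RBL.degW_append]
                    simp [RBL.degW, RBL.degL, deg_eq]
                    try ring
                  rw [hdegZ, hdvL]
                  omega
                · show (RBL.br b.1 :: v₁).length ≤ L - 1
                  have : v.1.length ≤ L := hL
                  simp only [List.length_cons]
                  omega
              · rw [concatLR_sing_invalid [] w₀' z hval]
                simp
          -- assemble
          calc D.d (D.d (sing k u) (sing k v)) (sing k w)
              = D.d (D.d (D.d (sing k u) (sing k vL)) (sing k vR)) (sing k w) := by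
                rw [step1]
            _ = D.d (D.d (concatLR k X u₀ v₁ (Pop k X (D.Kel (sing k a) (sing k b))))
                  (sing k vR)) (sing k w) := by rw [e_duvL]
            _ = D.d (concatLR k X u₀ v₁ (Pop k X (D.Kel (sing k a) (sing k b))))
                  (D.d (sing k vR) (sing k w)) := claimA _ memKAB
            _ = D.d (D.d (sing k u) (sing k vL)) (D.d (sing k vR) (sing k w)) := by
                rw [e_duvL]
            _ = D.d (D.d (sing k u) (sing k vL))
                  (concatLR k X [] w₀' (Pop k X (D.Kel (sing k c) (sing k dd)))) := by
                rw [e_dvRw]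
            _ = D.d (sing k u) (D.d (sing k vL)
                  (concatLR k X [] w₀' (Pop k X (D.Kel (sing k c) (sing k dd))))) :=
                claimB _ memKCD
            _ = D.d (sing k u) (D.d (sing k vL) (D.d (sing k vR) (sing k w))) := by
                rw [e_dvRw]
            _ = D.d (sing k u) (D.d (D.d (sing k vL) (sing k vR)) (sing k w)) := by
                rw [ihn (vL.deg + vR.deg + w.deg) (by omega) _ vL vR w le_rfl le_rfl]
            _ = D.d (sing k u) (D.d (sing k v) (sing k w)) := by rw [hsplit]

end FreeRBAData

namespace FreeRBAData

variable {k : Type v} [CommRing k] {X : Type u} {lam : k} (D : FreeRBAData k X lam)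

theorem d_assoc_sing (u v w : RBWord X) :
    D.d (D.d (sing k u) (sing k v)) (sing k w)
      = D.d (sing k u) (D.d (sing k v) (sing k w)) :=
  D.d_assoc_aux (u.deg + v.deg + w.deg) v.1.length u v w le_rfl le_rfl

theorem d_assoc (x y z : RBMod k X) :
    D.d (D.d x y) z = D.d x (D.d y z) := by
  induction x using Finsupp.induction_linear with
  | zero => simp
  | add p q hp hq => simp only [map_add, LinearMap.add_apply, hp, hq]
  | single u bu =>
    induction y using Finsupp.induction_linear with
    | zero => simp
    | add p q hp hq => simp only [map_add, LinearMap.add_apply, hp, hq]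
    | single v bv =>
      induction z using Finsupp.induction_linear with
      | zero => simp
      | add p q hp hq => simp only [map_add, hp, hq]
      | single w bw =>
        simp only [single_eq_smul_sing, map_smul, LinearMap.smul_apply]
        rw [D.d_assoc_sing u v w]

theorem mulT_tmul (x₁ x₂ y₁ y₂ : RBMod k X) :
    D.mulT (x₁ ⊗ₜ[k] x₂) (y₁ ⊗ₜ[k] y₂) = D.d x₁ y₁ ⊗ₜ[k] D.d x₂ y₂ := by
  simp [mulT, TensorProduct.map₂_apply_tmul]

theorem mulT_one_left (t : RBMod k X ⊗[k] RBMod k X) :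
    D.mulT (sing k RBWord.one ⊗ₜ[k] sing k RBWord.one) t = t := by
  induction t with
  | zero => simp
  | tmul y₁ y₂ => rw [D.mulT_tmul, D.d_one_left, D.d_one_left]
  | add p q hp hq => rw [map_add, hp, hq]

theorem mulT_one_right (t : RBMod k X ⊗[k] RBMod k X) :
    D.mulT t (sing k RBWord.one ⊗ₜ[k] sing k RBWord.one) = t := by
  induction t with
  | zero => simp
  | tmul y₁ y₂ => rw [D.mulT_tmul, D.d_one_right, D.d_one_right]
  | add p q hp hq => rw [map_add, LinearMap.add_apply, hp, hq]

theorem mulT_assoc (r s t : RBMod k X ⊗[k] RBMod k X) :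
    D.mulT (D.mulT r s) t = D.mulT r (D.mulT s t) := by
  induction r with
  | zero => simp
  | add p q hp hq => simp only [map_add, LinearMap.add_apply, hp, hq]
  | tmul r₁ r₂ =>
    induction s with
    | zero => simp
    | add p q hp hq => simp only [map_add, LinearMap.add_apply, hp, hq]
    | tmul s₁ s₂ =>
      induction t with
      | zero => simp
      | add p q hp hq => simp only [map_add, hp, hq]
      | tmul t₁ t₂ =>
        rw [D.mulT_tmul, D.mulT_tmul, D.mulT_tmul, D.mulT_tmul,
          D.d_assoc, D.d_assoc]

end FreeRBAData

namespace FreeRBAData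

variable {k : Type v} [CommRing k] {X : Type u} {lam : k} (D : FreeRBAData k X lam)

/-- `id ⊗ P` on `kX_∞ ⊗ kX_∞`. -/
noncomputable def P2 : (RBMod k X ⊗[k] RBMod k X) →ₗ[k] (RBMod k X ⊗[k] RBMod k X) :=
  TensorProduct.map LinearMap.id (Pop k X)

theorem P2_tmul (x y : RBMod k X) : (P2 : _ →ₗ[k] _) (x ⊗ₜ[k] y) = x ⊗ₜ[k] Pop k X y := by
  simp [P2]

theorem mulT_tmul_one_P2 (x : RBMod k X) (t : RBMod k X ⊗[k] RBMod k X) :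
    D.mulT (x ⊗ₜ[k] sing k RBWord.one) (P2 t)
      = P2 (D.mulT (x ⊗ₜ[k] sing k RBWord.one) t) := by
  induction t with
  | zero => simp
  | add p q hp hq => simp only [map_add, hp, hq]
  | tmul y₁ y₂ =>
    rw [P2_tmul, D.mulT_tmul, D.mulT_tmul, P2_tmul, D.d_one_left, D.d_one_left]

theorem mulT_P2_tmul_one (y : RBMod k X) (t : RBMod k X ⊗[k] RBMod k X) :
    D.mulT (P2 t) (y ⊗ₜ[k] sing k RBWord.one)
      = P2 (D.mulT t (y ⊗ₜ[k] sing k RBWord.one)) := by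
  induction t with
  | zero => simp
  | add p q hp hq => simp only [map_add, LinearMap.add_apply, hp, hq]
  | tmul t₁ t₂ =>
    rw [P2_tmul, D.mulT_tmul, D.mulT_tmul, P2_tmul, D.d_one_right, D.d_one_right]

theorem mulT_tmul_one_tmul_one (x y : RBMod k X) :
    D.mulT (x ⊗ₜ[k] sing k RBWord.one) (y ⊗ₜ[k] sing k RBWord.one)
      = D.d x y ⊗ₜ[k] sing k RBWord.one := by
  rw [D.mulT_tmul, D.d_one_left]

set_option maxHeartbeats 1000000 in
theorem mulT_P2_P2 (s t : RBMod k X ⊗[k] RBMod k X) :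
    D.mulT (P2 s) (P2 t)
      = P2 (D.mulT (P2 s) t) + P2 (D.mulT s (P2 t)) + lam • P2 (D.mulT s t) := by
  induction s with
  | zero => simp only [map_zero, LinearMap.zero_apply, smul_zero, add_zero]
  | add p q hp hq =>
    simp only [map_add, LinearMap.add_apply, hp, hq, smul_add]
    module
  | tmul s₁ s₂ =>
    induction t with
    | zero => simp only [map_zero, smul_zero, add_zero]
    | add p q hp hq =>
      simp only [map_add, hp, hq, smul_add]
      module
    | tmul t₁ t₂ =>
      rw [P2_tmul, P2_tmul, D.mulT_tmul, D.mulT_tmul, D.mulT_tmul, D.mulT_tmul,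
        P2_tmul, P2_tmul, P2_tmul]
      rw [D.d_PP s₂ t₂]
      rw [show D.Kel s₂ t₂ = D.d (Pop k X s₂) t₂ + D.d s₂ (Pop k X t₂)
        + lam • D.d s₂ t₂ from rfl]
      rw [map_add, map_add, map_smul, TensorProduct.tmul_add, TensorProduct.tmul_add,
        TensorProduct.tmul_smul]

end FreeRBAData

namespace FreeRBBialgData

variable {k : Type v} [CommRing k] {X : Type u} {lam : k} (D : FreeRBBialgData k X lam)

theorem Dl_Pop (y : RBMod k X) :
    D.Dl (Pop k X y)
      = Pop k X y ⊗ₜ[k] sing k RBWord.one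
        + TensorProduct.map LinearMap.id (Pop k X) (D.Dl y) := by
  induction y using Finsupp.induction_linear with
  | zero => simp
  | add p q hp hq =>
    rw [map_add, map_add, hp, hq, map_add, map_add, TensorProduct.add_tmul]
    module
  | single w b =>
    rw [single_eq_smul_sing, map_smul, map_smul, map_smul, map_smul, D.Dl_br w,
      smul_add, TensorProduct.smul_tmul']

end FreeRBBialgData

namespace RBL

variable {X : Type u}

theorem wordValid_single {a : RBL X} (h : valid a) : wordValid [a] := by
  simpa [wordValid] using h

theorem wordValid_head {a : RBL X} {l : List (RBL X)} (h : wordValid (a :: l)) :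
    valid a := valid_of_mem h List.mem_cons_self

theorem wordValid_tail {a : RBL X} {l : List (RBL X)} (h : wordValid (a :: l)) :
    wordValid l := by
  rw [wordValid_iff] at h ⊢
  exact ⟨fun x hx => h.1 x (List.mem_cons_of_mem a hx), h.2.tail⟩

end RBL

theorem mulT_def {k : Type v} [CommRing k] {X : Type u} {lam : k}
    (E : FreeRBAData k X lam) : E.mulT = TensorProduct.map₂ E.d E.d := rfl

namespace FreeRBBialgData

variable {k : Type v} [CommRing k] {X : Type u} {lam : k} (D : FreeRBBialgData k X lam)

set_option maxHeartbeats 1000000 in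
theorem Dl_d_aux : ∀ (n L : ℕ) (u v : RBWord X),
    u.deg + v.deg ≤ n → u.1.length ≤ L →
    D.Dl (D.d (sing k u) (sing k v))
      = D.toFreeRBAData.mulT (D.Dl (sing k u)) (D.Dl (sing k v)) := by
  intro n
  induction n using Nat.strong_induction_on with
  | _ n ihn =>
  intro L
  induction L using Nat.strong_induction_on with
  | _ L ihL =>
  intro u v hn hL
  by_cases hu0 : u.1 = []
  · have h1 : sing k u = sing k RBWord.one := sing_eq_of hu0 RBL.wordValid_nil
    rw [h1, D.toFreeRBAData.d_one_left, D.Dl_one, D.toFreeRBAData.mulT_one_left]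
  by_cases hv0 : v.1 = []
  · have h1 : sing k v = sing k RBWord.one := sing_eq_of hv0 RBL.wordValid_nil
    rw [h1, D.toFreeRBAData.d_one_right, D.Dl_one, D.toFreeRBAData.mulT_one_right]
  obtain ⟨α, l, hu1⟩ : ∃ α l, u.1 = α :: l := by
    cases h : u.1 with
    | nil => exact absurd h hu0
    | cons α l => exact ⟨α, l, rfl⟩
  have hα : RBL.wordValid [α] := RBL.wordValid_single (RBL.wordValid_head (hu1 ▸ u.2))
  by_cases hl : l = []
  · -- `u` is a single letter
    rw [hl] at hu1
    by_cases hval : RBL.wordValid (u.1 ++ v.1)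
    · -- the concatenation is a basis word
      have hcv : RBL.wordValid (α :: v.1) := by
        rw [hu1] at hval
        exact hval
      rw [D.toFreeRBAData.d_concat u v hval]
      rw [show sing k (⟨u.1 ++ v.1, hval⟩ : RBWord X) = sing k ⟨α :: v.1, hcv⟩ from
        sing_congr _ _ (by rw [hu1]; rfl)]
      rw [D.Dl_cons α v.1 hcv hα v.2 hv0]
      rw [show sing k (⟨[α], hα⟩ : RBWord X) = sing k u from (sing_eq_of hu1 hα).symm]
      rw [show (⟨v.1, v.2⟩ : RBWord X) = v from rfl, mulT_def]
    · -- junction of two brackets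
      rcases concat_or_br u v hu0 hv0 with h | ⟨u₀, a, b, v₀, hU, hV⟩
      · exact absurd h hval
      have hu₀nil : u₀ = [] := by
        have hlen := congrArg List.length hU
        rw [hu1] at hlen
        simp only [List.length_cons, List.length_nil, List.length_append] at hlen
        have h0 : u₀.length = 0 := by omega
        exact List.length_eq_zero_iff.mp h0
      have hU' : u.1 = [RBL.br a.1] := by rw [hU, hu₀nil]; rfl
      have e_su : sing k u = Pop k X (sing k a) := by
        rw [Pop_sing a]; exact sing_eq_of hU' _
      have hdu : u.deg = a.deg + 1 := by
        rw [deg_eq, hU']; simp [RBL.degW, RBL.degL, deg_eq]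
      by_cases hv₀ : v₀ = []
      · -- CORE case: `u = ⌊ā⌋`, `v = ⌊b̄⌋`
        have hv1 : v.1 = [RBL.br b.1] := by rw [hV, hv₀]
        have e_sv : sing k v = Pop k X (sing k b) := by
          rw [Pop_sing b]; exact sing_eq_of hv1 _
        have hdv : v.deg = b.deg + 1 := by
          rw [deg_eq, hv1]; simp [RBL.degW, RBL.degL, deg_eq]
        have degA : RBWord.deg (⟨[RBL.br a.1], RBL.wordValid_br a.2⟩ : RBWord X)
            = a.deg + 1 := deg_br a
        have degB : RBWord.deg (⟨[RBL.br b.1], RBL.wordValid_br b.2⟩ : RBWord X)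
            = b.deg + 1 := deg_br b
        have ih1 : D.Dl (D.d (Pop k X (sing k a)) (sing k b))
            = D.toFreeRBAData.mulT (D.Dl (Pop k X (sing k a))) (D.Dl (sing k b)) := by
          rw [Pop_sing a]
          exact ihn (a.deg + 1 + b.deg) (by omega) 1 _ b (by rw [degA]) (by simp)
        have ih2 : D.Dl (D.d (sing k a) (Pop k X (sing k b)))
            = D.toFreeRBAData.mulT (D.Dl (sing k a)) (D.Dl (Pop k X (sing k b))) := by
          rw [Pop_sing b]
          exact ihn (a.deg + (b.deg + 1)) (by omega) a.1.length a _ (by rw [degB])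
            le_rfl
        have ih3 : D.Dl (D.d (sing k a) (sing k b))
            = D.toFreeRBAData.mulT (D.Dl (sing k a)) (D.Dl (sing k b)) :=
          ihn (a.deg + b.deg) (by omega) a.1.length a b le_rfl le_rfl
        -- rewrite both sides into atoms
        rw [D.toFreeRBAData.d_br' u v [] [] a b hU' hv1, concatLR_nil_nil,
          LinearMap.id_apply, e_su, e_sv]
        have P2def : TensorProduct.map LinearMap.id (Pop k X) = (FreeRBAData.P2 :
          (RBMod k X ⊗[k] RBMod k X) →ₗ[k] _) := rfl
        simp only [D.Dl_Pop, P2def, FreeRBAData.Kel, map_add, map_smul,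
          LinearMap.add_apply, LinearMap.smul_apply, smul_add, ih1, ih2, ih3,
          D.toFreeRBAData.mulT_tmul_one_tmul_one, D.toFreeRBAData.mulT_tmul_one_P2,
          D.toFreeRBAData.mulT_P2_tmul_one, D.toFreeRBAData.mulT_P2_P2,
          D.toFreeRBAData.d_PP, TensorProduct.add_tmul, TensorProduct.smul_tmul']
        module
      · -- `v` has several letters, peel its first (bracket) letter
        have hv2' : RBL.wordValid (RBL.br b.1 :: v₀) := by rw [← hV]; exact v.2
        have hbv : RBL.wordValid ([RBL.br b.1] ++ v₀) := hv2'
        have hv₀valid : RBL.wordValid v₀ := (RBL.wordValid_append_iff.1 hbv).2.1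
        have hvh : RBL.wordValid [RBL.br b.1] := RBL.wordValid_br b.2
        have hdvh : RBWord.deg (⟨[RBL.br b.1], hvh⟩ : RBWord X) = b.deg + 1 :=
          deg_br b
        have hdvt : 1 ≤ RBWord.deg (⟨v₀, hv₀valid⟩ : RBWord X) :=
          RBWord.deg_pos hv₀
        have hdv : v.deg = b.deg + 1 + RBWord.deg (⟨v₀, hv₀valid⟩ : RBWord X) := by
          rw [deg_eq, hV, show RBL.br b.1 :: v₀ = [RBL.br b.1] ++ v₀ from rfl,
            RBL.degW_append]
          simp [RBL.degW, RBL.degL, deg_eq]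
          try ring
          rfl
        have claimC : ∀ y : RBMod k X,
            D.Dl (concatLR k X [] v₀ (Pop k X y))
              = D.toFreeRBAData.mulT (D.Dl (Pop k X y))
                  (D.Dl (sing k ⟨v₀, hv₀valid⟩)) := by
          intro y
          induction y using Finsupp.induction_linear with
          | zero => simp only [map_zero, LinearMap.zero_apply]
          | add p q hp hq =>
            simp only [map_add, LinearMap.add_apply, hp, hq]
          | single m bb =>
            simp only [single_eq_smul_sing, map_smul, LinearMap.smul_apply]
            congr 1
            have h1 : RBL.wordValid (([] : List (RBL X))
                ++ (⟨[RBL.br m.1], RBL.wordValid_br m.2⟩ : RBWord X).1 ++ v₀) :=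
              wordValid_mid (show RBL.wordValid (([] : List (RBL X)) ++ [RBL.br b.1])
                from hvh) hv2' m
            rw [Pop_sing m, concatLR_sing [] v₀ _ h1]
            have hcons : RBL.wordValid (RBL.br m.1 :: v₀) := h1
            rw [show sing k (⟨[] ++ (⟨[RBL.br m.1], RBL.wordValid_br m.2⟩ :
              RBWord X).1 ++ v₀, h1⟩ : RBWord X)
                = sing k ⟨RBL.br m.1 :: v₀, hcons⟩ from rfl]
            rw [D.Dl_cons (RBL.br m.1) v₀ hcons (RBL.wordValid_br m.2) hv₀valid hv₀,
              mulT_def]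
        rw [D.toFreeRBAData.d_br' u v [] v₀ a b hU' hV, claimC]
        have e2 : Pop k X (D.toFreeRBAData.Kel (sing k a) (sing k b))
            = D.d (sing k u) (sing k ⟨[RBL.br b.1], hvh⟩) := by
          rw [← D.toFreeRBAData.d_PP (sing k a) (sing k b), Pop_sing a, Pop_sing b,
            show sing k (⟨[RBL.br a.1], RBL.wordValid_br a.2⟩ : RBWord X)
              = sing k u from (sing_eq_of hU' _).symm]
        rw [e2]
        rw [ihn (u.deg + (b.deg + 1)) (by omega) 1 u ⟨[RBL.br b.1], hvh⟩
          (by rw [hdvh]) (by rw [hu1]; simp)]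
        rw [D.toFreeRBAData.mulT_assoc]
        rw [show D.Dl (sing k v) = D.toFreeRBAData.mulT
            (D.Dl (sing k ⟨[RBL.br b.1], hvh⟩)) (D.Dl (sing k ⟨v₀, hv₀valid⟩)) from by
          rw [sing_eq_of hV hv2', D.Dl_cons (RBL.br b.1) v₀ hv2' hvh hv₀valid hv₀,
            mulT_def]]
  · -- `u` has at least two letters: peel its first letter
    have hlw : RBL.wordValid l := RBL.wordValid_tail (hu1 ▸ u.2)
    have hcatv : RBL.wordValid ((⟨[α], hα⟩ : RBWord X).1 ++ (⟨l, hlw⟩ : RBWord X).1) := by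
      show RBL.wordValid (α :: l)
      exact hu1 ▸ u.2
    have e_u : D.d (sing k ⟨[α], hα⟩) (sing k ⟨l, hlw⟩) = sing k u := by
      rw [D.toFreeRBAData.d_concat _ _ hcatv]
      exact (sing_eq_of hu1 hcatv).symm
    have hdsplit : RBWord.deg (⟨[α], hα⟩ : RBWord X)
        + RBWord.deg (⟨l, hlw⟩ : RBWord X) = u.deg := by
      show RBL.degW [α] + RBL.degW l = RBL.degW u.1
      rw [hu1]
      simp [RBL.degW]
    have hd1 : 1 ≤ RBWord.deg (⟨[α], hα⟩ : RBWord X) := RBWord.deg_pos (by simp)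
    have claimP : ∀ x ∈ Fil k X (RBWord.deg (⟨l, hlw⟩ : RBWord X) + v.deg),
        D.Dl (D.d (sing k ⟨[α], hα⟩) x)
          = D.toFreeRBAData.mulT (D.Dl (sing k ⟨[α], hα⟩)) (D.Dl x) := by
      intro x hx
      have := eq_on_supported
        (D.Dl.comp (D.d (sing k ⟨[α], hα⟩)))
        ((D.toFreeRBAData.mulT (D.Dl (sing k ⟨[α], hα⟩))).comp D.Dl)
        (fun z hz => ?_) hx
      · simpa using this
      · simp only [LinearMap.comp_apply]
        refine ihL 1 ?_ ⟨[α], hα⟩ z ?_ (by simp)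
        · have : u.1.length = l.length + 1 := by rw [hu1]; simp
          have hl1 : 1 ≤ l.length := by
            cases hll : l with
            | nil => exact absurd hll hl
            | cons x t => simp
          omega
        · have hz' : z.deg ≤ RBWord.deg (⟨l, hlw⟩ : RBWord X) + v.deg := hz
          omega
    rw [← e_u, D.toFreeRBAData.d_assoc, claimP _
      (D.toFreeRBAData.d_fil ⟨l, hlw⟩ v)]
    rw [ihn (RBWord.deg (⟨l, hlw⟩ : RBWord X) + v.deg) (by omega) l.length
      ⟨l, hlw⟩ v le_rfl le_rfl]
    rw [← D.toFreeRBAData.mulT_assoc]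
    have hvd : 1 ≤ v.deg := RBWord.deg_pos hv0
    rw [ihn u.deg (by omega) 1 ⟨[α], hα⟩ ⟨l, hlw⟩ (le_of_eq hdsplit) (by simp)]

end FreeRBBialgData
/-- For all `u, v ∈ kX_∞`, `Δ(u ⋄ v) = Δ(u) ⋄ Δ(v)`; that is, `Δ` is a
homomorphism of `k`-algebras from `(kX_∞, ⋄)` to `(kX_∞ ⊗ kX_∞, ⋄ ⊗ ⋄)`. -/
theorem coproduct_is_algebra_hom
    {k : Type v} [CommRing k] {X : Type u} {lam : k} (D : FreeRBBialgData k X lam)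
    (u v : RBMod k X) :
    D.Dl (D.d u v) = D.toFreeRBAData.mulT (D.Dl u) (D.Dl v) := by
  induction u using Finsupp.induction_linear with
  | zero => simp only [map_zero, LinearMap.zero_apply]
  | add p q hp hq => simp only [map_add, LinearMap.add_apply, hp, hq]
  | single w b =>
    induction v using Finsupp.induction_linear with
    | zero => simp only [map_zero, LinearMap.zero_apply]
    | add p q hp hq => simp only [map_add, hp, hq]
    | single w' b' =>
      simp only [single_eq_smul_sing, map_smul, LinearMap.smul_apply]
      rw [D.Dl_d_aux (w.deg + w'.deg) w.1.length w w' le_rfl le_rfl]
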